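/- For every complex number q with |q| < 1, the following identity holds: (1+q^3) · Σ_{n≥0} (−q^2; q^2)_n q^{2n+1} / (q; q^2)_n = q^2(q^4; q^4)_∞/(q; q)_∞ − q^2 + q. -/

import Mathlib

open Filter Topology Finset

lemma tendsto_powerset_atTop : Tendsto (fun s : Finset ℕ => s.powerset) atTop atTop := by
  apply tendsto_atTop_atTop.2
  intro b
  refine ⟨b.sup id, fun s hs => ?_⟩
  intro T hT
  exact Finset.mem_powerset.2 (le_trans (Finset.le_sup (f := id) hT) hs)

lemma summable_prod_of_summable_norm {x : ℕ → ℂ} (hx : Summable fun j => ‖x j‖) :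
    Summable (fun T : Finset ℕ => ∏ j ∈ T, x j) := by
  apply Summable.of_norm
  apply summable_of_sum_le (c := Real.exp (∑' j, ‖x j‖)) (fun T => norm_nonneg _)
  intro u
  have h1 : ∑ T ∈ u, ‖∏ j ∈ T, x j‖ ≤ ∑ T ∈ (u.sup id).powerset, ‖∏ j ∈ T, x j‖ := by
    apply Finset.sum_le_sum_of_subset_of_nonneg
    · intro T hT
      exact Finset.mem_powerset.2 (Finset.le_sup (f := id) hT)
    · intro _ _ _; exact norm_nonneg _
  refine h1.trans ?_
  set s := u.sup id
  have h2 : ∑ T ∈ s.powerset, ‖∏ j ∈ T, x j‖ = ∏ j ∈ s, (‖x j‖ + 1) := by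
    rw [Finset.prod_add]
    simp [norm_prod]
  rw [h2]
  calc ∏ j ∈ s, (‖x j‖ + 1) ≤ ∏ j ∈ s, Real.exp ‖x j‖ := by
        apply Finset.prod_le_prod
        · intro j _; positivity
        · intro j _; linarith [Real.add_one_le_exp (‖x j‖)]
    _ = Real.exp (∑ j ∈ s, ‖x j‖) := by rw [Real.exp_sum]
    _ ≤ Real.exp (∑' j, ‖x j‖) := by
        apply Real.exp_le_exp.2
        exact Summable.sum_le_tsum s (fun j _ => norm_nonneg _) hx

lemma hasProd_one_add {x : ℕ → ℂ} (hx : Summable fun j => ‖x j‖) :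
    HasProd (fun j => 1 + x j) (∑' T : Finset ℕ, ∏ j ∈ T, x j) := by
  have hs := (summable_prod_of_summable_norm hx).hasSum
  have key : ∀ s : Finset ℕ, ∏ j ∈ s, (1 + x j) = ∑ T ∈ s.powerset, ∏ j ∈ T, x j := by
    intro s
    simp only [add_comm (1 : ℂ)]
    rw [Finset.prod_add]
    simp
  have : Tendsto ((fun u : Finset (Finset ℕ) => ∑ T ∈ u, ∏ j ∈ T, x j) ∘
      (fun s : Finset ℕ => s.powerset)) atTop (𝓝 (∑' T : Finset ℕ, ∏ j ∈ T, x j)) :=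
    hs.comp tendsto_powerset_atTop
  unfold HasProd
  convert this using 1
  funext s
  exact key s
  simp [SummationFilter.unconditional_filter]

/-- The finite q-Pochhammer symbol `(a; q)_n = ∏_{j=0}^{n-1} (1 - a q^j)`. -/
noncomputable def qPoch (a q : ℂ) (n : ℕ) : ℂ := ∏ j ∈ Finset.range n, (1 - a * q ^ j)

/-- The infinite q-Pochhammer symbol `(a; q)_∞ = ∏_{j=0}^{∞} (1 - a q^j)`. -/
noncomputable def qPochInf (a q : ℂ) : ℂ := ∏' j : ℕ, (1 - a * q ^ j)

lemma summable_norm_geom (c q : ℂ) (hq : ‖q‖ < 1) : Summable fun j : ℕ => ‖c‖ * ‖q‖ ^ j :=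
  (summable_geometric_of_lt_one (norm_nonneg q) hq).mul_left _

lemma hasProd_qPochInf (a q : ℂ) (hq : ‖q‖ < 1) :
    HasProd (fun j : ℕ => 1 - a * q ^ j) (qPochInf a q) := by
  have hx : Summable fun j : ℕ => ‖-(a * q ^ j)‖ := by
    refine (summable_norm_geom a q hq).congr fun j => ?_
    simp [norm_mul, norm_pow]
  have h := (hasProd_one_add hx).multipliable
  have he : (fun j : ℕ => 1 + -(a * q ^ j)) = fun j : ℕ => 1 - a * q ^ j := by
    funext j; ring
  rw [he] at h
  exact h.hasProd

lemma qPochInf_ne_zero (a q : ℂ) (hq : ‖q‖ < 1) (h : ∀ j : ℕ, 1 - a * q ^ j ≠ 0) :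
    qPochInf a q ≠ 0 := by
  set f : ℕ → ℂ := fun j => 1 - a * q ^ j with hf
  -- the inverses form a multipliable family
  have htend : Tendsto (fun j : ℕ => a * q ^ j) atTop (𝓝 0) := by
    simpa using (tendsto_pow_atTop_nhds_zero_of_norm_lt_one hq).const_mul a
  have hev : ∀ᶠ j in atTop, ‖(f j)⁻¹ - 1‖ ≤ 2 * (‖a‖ * ‖q‖ ^ j) := by
    have htn : Tendsto (fun j : ℕ => ‖a * q ^ j‖) atTop (𝓝 0) := by simpa using htend.norm
    filter_upwards [htn.eventually_le_const (by norm_num : (0:ℝ) < 1/2)] with j hj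
    have hfj : (1:ℝ)/2 ≤ ‖f j‖ := by
      have := norm_sub_norm_le (1 : ℂ) (a * q ^ j)
      simp only [norm_one] at this
      simp only [hf]
      linarith
    have hfne : f j ≠ 0 := h j
    have : (f j)⁻¹ - 1 = (a * q ^ j) * (f j)⁻¹ := by
      field_simp [hfne, hf]
      simp only [hf]
      ring
    rw [this, norm_mul, norm_inv]
    have h2 : ‖(f j)‖⁻¹ ≤ 2 := by
      rw [inv_le_comm₀ (by linarith) (by norm_num)]
      linarith
    calc ‖a * q ^ j‖ * ‖f j‖⁻¹ ≤ ‖a * q ^ j‖ * 2 := by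
          apply mul_le_mul_of_nonneg_left h2 (norm_nonneg _)
      _ = 2 * (‖a‖ * ‖q‖ ^ j) := by rw [norm_mul, norm_pow]; ring
  have hy : Summable fun j : ℕ => ‖(f j)⁻¹ - 1‖ := by
    apply Summable.of_norm_bounded_eventually_nat (g := fun j => 2 * (‖a‖ * ‖q‖ ^ j))
      ((summable_norm_geom a q hq).mul_left 2)
    filter_upwards [hev] with j hj
    simpa using hj
  have hg : HasProd (fun j => (f j)⁻¹) (∑' T : Finset ℕ, ∏ j ∈ T, ((f j)⁻¹ - 1)) := by
    have := hasProd_one_add hy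
    have he : (fun j : ℕ => 1 + ((f j)⁻¹ - 1)) = fun j => (f j)⁻¹ := by funext j; ring
    rwa [he] at this
  have hmul := (hasProd_qPochInf a q hq).mul hg
  have hone : HasProd (fun _ : ℕ => (1:ℂ)) (qPochInf a q * ∑' T : Finset ℕ, ∏ j ∈ T, ((f j)⁻¹ - 1)) := by
    refine HasProd.congr_fun hmul fun j => ?_
    exact (mul_inv_cancel₀ (h j)).symm
  have h1 : qPochInf a q * (∑' T : Finset ℕ, ∏ j ∈ T, ((f j)⁻¹ - 1)) = 1 :=
    hone.unique hasProd_one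
  intro h0
  rw [h0, zero_mul] at h1
  exact zero_ne_one h1

lemma one_sub_ne {c : ℂ} (hc : ‖c‖ < 1) : 1 - c ≠ 0 := by
  intro h0
  have : (1:ℂ) = c := by linear_combination h0
  rw [← this] at hc
  simp at hc

set_option maxHeartbeats 1000000 in
theorem stmt_5 (q : ℂ) (hq : ‖q‖ < 1) :
    (1 + q ^ 3) * ∑' n : ℕ, qPoch (-q ^ 2) (q ^ 2) n * q ^ (2 * n + 1) / qPoch q (q ^ 2) n =
      q ^ 2 * qPochInf (q ^ 4) (q ^ 4) / qPochInf q q - q ^ 2 + q := by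
  have hqn : ‖q‖ < 1 := hq
  have hq0 : (0:ℝ) ≤ ‖q‖ := norm_nonneg q
  have hq2 : ‖q ^ 2‖ < 1 := by
    rw [norm_pow]; exact pow_lt_one₀ hq0 hqn two_ne_zero
  have hq4 : ‖q ^ 4‖ < 1 := by
    rw [norm_pow]; exact pow_lt_one₀ hq0 hqn (by norm_num)
  -- norms of the factors
  have hnormQ : ∀ j : ℕ, ‖q * (q ^ 2) ^ j‖ < 1 := by
    intro j
    rw [norm_mul]
    calc ‖q‖ * ‖(q ^ 2) ^ j‖ ≤ ‖q‖ * 1 := by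
          apply mul_le_mul_of_nonneg_left _ hq0
          rw [norm_pow]
          exact pow_le_one₀ (norm_nonneg _) hq2.le
      _ < 1 := by rwa [mul_one]
  have hnormE : ∀ j : ℕ, ‖q ^ 2 * (q ^ 2) ^ j‖ < 1 := by
    intro j
    rw [norm_mul]
    calc ‖q ^ 2‖ * ‖(q ^ 2) ^ j‖ ≤ ‖q ^ 2‖ * 1 := by
          apply mul_le_mul_of_nonneg_left _ (norm_nonneg _)
          rw [norm_pow]
          exact pow_le_one₀ (norm_nonneg _) hq2.le
      _ < 1 := by rwa [mul_one]
  -- infinite products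
  have hP := hasProd_qPochInf (-q ^ 2) (q ^ 2) hq2
  have hQ := hasProd_qPochInf q (q ^ 2) hq2
  have hE := hasProd_qPochInf (q ^ 2) (q ^ 2) hq2
  have hR := hasProd_qPochInf (q ^ 4) (q ^ 4) hq4
  have hS := hasProd_qPochInf q q hqn
  have hQne : qPochInf q (q ^ 2) ≠ 0 :=
    qPochInf_ne_zero _ _ hq2 fun j => one_sub_ne (hnormQ j)
  have hEne : qPochInf (q ^ 2) (q ^ 2) ≠ 0 :=
    qPochInf_ne_zero _ _ hq2 fun j => one_sub_ne (hnormE j)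
  -- S = Q * E
  have hQ' : HasProd (fun k : ℕ => 1 - q * q ^ (2 * k)) (qPochInf q (q ^ 2)) := by
    refine HasProd.congr_fun hQ fun k => ?_
    rw [pow_mul]
  have hE' : HasProd (fun k : ℕ => 1 - q * q ^ (2 * k + 1)) (qPochInf (q ^ 2) (q ^ 2)) := by
    refine HasProd.congr_fun hE fun k => ?_
    rw [pow_succ, pow_mul]
    ring
  have hSeq : qPochInf q q = qPochInf q (q ^ 2) * qPochInf (q ^ 2) (q ^ 2) :=
    hS.unique (hQ'.even_mul_odd hE')
  -- R = P * E
  have hPE : HasProd (fun k : ℕ => (1 - -q ^ 2 * (q ^ 2) ^ k) * (1 - q ^ 2 * (q ^ 2) ^ k))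
      (qPochInf (-q ^ 2) (q ^ 2) * qPochInf (q ^ 2) (q ^ 2)) := hP.mul hE
  have hPE' : HasProd (fun k : ℕ => 1 - q ^ 4 * (q ^ 4) ^ k)
      (qPochInf (-q ^ 2) (q ^ 2) * qPochInf (q ^ 2) (q ^ 2)) := by
    refine HasProd.congr_fun hPE fun k => ?_
    ring
  have hReq : qPochInf (q ^ 4) (q ^ 4) = qPochInf (-q ^ 2) (q ^ 2) * qPochInf (q ^ 2) (q ^ 2) :=
    hR.unique hPE'
  -- the limit L
  set L : ℂ := qPochInf (-q ^ 2) (q ^ 2) / qPochInf q (q ^ 2) with hL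
  have hRS : qPochInf (q ^ 4) (q ^ 4) / qPochInf q q = L := by
    rw [hReq, hSeq, hL, mul_div_mul_right _ _ hEne]
  -- partial products converge
  have htendP : Filter.Tendsto (fun n => qPoch (-q ^ 2) (q ^ 2) n) Filter.atTop
      (nhds (qPochInf (-q ^ 2) (q ^ 2))) := hP.tendsto_prod_nat
  have htendQ : Filter.Tendsto (fun n => qPoch q (q ^ 2) n) Filter.atTop
      (nhds (qPochInf q (q ^ 2))) := hQ.tendsto_prod_nat
  set a : ℕ → ℂ := fun n => qPoch (-q ^ 2) (q ^ 2) n / qPoch q (q ^ 2) n with ha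
  have htenda : Filter.Tendsto a Filter.atTop (nhds L) := htendP.div htendQ hQne
  -- boundedness
  obtain ⟨C, hC⟩ := htenda.norm.bddAbove_range
  have hCb : ∀ n, ‖a n‖ ≤ C := fun n => hC (Set.mem_range_self n)
  -- the summand
  set t : ℕ → ℂ := fun n => qPoch (-q ^ 2) (q ^ 2) n * q ^ (2 * n + 1) / qPoch q (q ^ 2) n with htdef
  have ht : ∀ n, t n = a n * q ^ (2 * n + 1) := by
    intro n
    exact mul_div_right_comm _ _ _
  have hBne : ∀ n, qPoch q (q ^ 2) n ≠ 0 := by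
    intro n
    rw [qPoch]
    exact Finset.prod_ne_zero_iff.2 fun j _ => one_sub_ne (hnormQ j)
  -- summability
  have hsum : Summable t := by
    apply Summable.of_norm_bounded (g := fun n => C * ‖q‖ * (‖q ^ 2‖) ^ n)
    · exact (summable_geometric_of_lt_one (norm_nonneg _) hq2).mul_left _
    · intro n
      rw [ht, norm_mul, norm_pow]
      have h1 : ‖q‖ ^ (2 * n + 1) = ‖q‖ * ‖q ^ 2‖ ^ n := by
        rw [norm_pow, ← pow_mul, pow_add, pow_one]
        ring
      rw [h1, ← mul_assoc]
      apply mul_le_mul_of_nonneg_right _ (pow_nonneg (norm_nonneg _) n)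
      exact mul_le_mul_of_nonneg_right (hCb n) (norm_nonneg q)
  have hparts : Filter.Tendsto (fun N => ∑ n ∈ Finset.range N, t n) Filter.atTop
      (nhds (∑' n, t n)) := hsum.hasSum.tendsto_sum_nat
  -- telescoping
  set b : ℕ → ℂ := fun n => (q ^ (2 * n + 1) - q ^ 2) * a n with hb
  have key : ∀ n, (1 + q ^ 3) * t n = b n - b (n + 1) := by
    intro n
    have hA1 : qPoch (-q ^ 2) (q ^ 2) (n + 1) =
        qPoch (-q ^ 2) (q ^ 2) n * (1 + q ^ 2 * (q ^ 2) ^ n) := by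
      rw [qPoch, qPoch, Finset.prod_range_succ]
      ring
    have hB1 : qPoch q (q ^ 2) (n + 1) = qPoch q (q ^ 2) n * (1 - q * (q ^ 2) ^ n) := by
      rw [qPoch, qPoch, Finset.prod_range_succ]
    have h1 : (1 : ℂ) - q * (q ^ 2) ^ n ≠ 0 := one_sub_ne (hnormQ n)
    have hB := hBne n
    simp only [ht n, hb, ha, hA1, hB1]
    field_simp
    ring
  have hps : ∀ N, (1 + q ^ 3) * ∑ n ∈ Finset.range N, t n = b 0 - b N := by
    intro N
    rw [Finset.mul_sum]
    rw [Finset.sum_congr rfl fun n _ => key n]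
    exact Finset.sum_range_sub' b N
  -- limit of b
  have htendpow : Filter.Tendsto (fun n : ℕ => q ^ (2 * n + 1)) Filter.atTop (nhds 0) := by
    have h0 : Filter.Tendsto (fun n : ℕ => q * (q ^ 2) ^ n) Filter.atTop (nhds (q * 0)) :=
      (tendsto_pow_atTop_nhds_zero_of_norm_lt_one hq2).const_mul q
    rw [mul_zero] at h0
    refine h0.congr fun n => ?_
    rw [← pow_mul, pow_add, pow_one]
    ring
  have htendb : Filter.Tendsto b Filter.atTop (nhds ((0 - q ^ 2) * L)) :=
    (htendpow.sub_const _).mul htenda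
  have htendall : Filter.Tendsto (fun N => (1 + q ^ 3) * ∑ n ∈ Finset.range N, t n)
      Filter.atTop (nhds (b 0 - (0 - q ^ 2) * L)) := by
    exact (htendb.const_sub (b 0)).congr fun N => (hps N).symm
  have hfinal : (1 + q ^ 3) * ∑' n, t n = b 0 - (0 - q ^ 2) * L :=
    tendsto_nhds_unique (hparts.const_mul _) htendall
  have hb0 : b 0 = (q - q ^ 2) := by
    rw [hb]
    simp [ha, qPoch]
  rw [mul_div_assoc, hRS]
  rw [hfinal, hb0]
  ring
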